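/- For every real x with |x| < 1, the power series identity ∑_{k=1}^{∞} k · C(2k, k) · (x/4)^k = x / (2(1−x)^{3/2}) holds. -/

import Mathlib

open Real Set

private noncomputable def cbT (y : ℝ) : ℝ := ∑' n : ℕ, ((2 * n).choose n : ℝ) * y ^ n

private lemma cb_le_four_pow (n : ℕ) : (((2 * n).choose n : ℕ) : ℝ) ≤ 4 ^ n := by
  have h : (2 * n).choose n ≤ 4 ^ n := by
    calc (2 * n).choose n ≤ ∑ i ∈ Finset.range (2 * n + 1), (2 * n).choose i :=
          Finset.single_le_sum (fun i _ => Nat.zero_le _)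
            (Finset.mem_range.2 (by omega))
      _ = 2 ^ (2 * n) := Nat.sum_range_choose (2 * n)
      _ = 4 ^ n := by rw [pow_mul]; norm_num
  exact_mod_cast h

private lemma cb_summable_aux {y : ℝ} (hy : |y| < 4⁻¹) (k : ℕ) :
    Summable (fun n : ℕ => (n : ℝ) ^ k * ((2 * n).choose n : ℝ) * y ^ n) := by
  have h4 : ‖4 * |y|‖ < 1 := by
    rw [Real.norm_eq_abs, abs_of_nonneg (by positivity)]
    linarith [hy]
  refine Summable.of_norm_bounded
    (summable_pow_mul_geometric_of_norm_lt_one k h4) fun n => ?_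
  have h1 : (0:ℝ) ≤ ((2 * n).choose n : ℝ) := by positivity
  calc ‖(n : ℝ) ^ k * ((2 * n).choose n : ℝ) * y ^ n‖
      = (n : ℝ) ^ k * ((2 * n).choose n : ℝ) * |y| ^ n := by
        rw [norm_mul, norm_mul, Real.norm_eq_abs, Real.norm_eq_abs, Real.norm_eq_abs,
          abs_of_nonneg (by positivity : (0:ℝ) ≤ (n:ℝ)^k), abs_of_nonneg h1, abs_pow]
    _ ≤ (n : ℝ) ^ k * (4 : ℝ) ^ n * |y| ^ n := by gcongr; exact cb_le_four_pow n
    _ = (n : ℝ) ^ k * (4 * |y|) ^ n := by rw [mul_pow]; ring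

private lemma summable_cb {y : ℝ} (hy : |y| < 4⁻¹) :
    Summable (fun n : ℕ => ((2 * n).choose n : ℝ) * y ^ n) := by
  simpa using cb_summable_aux hy 0

private lemma summable_cb1 {y : ℝ} (hy : |y| < 4⁻¹) :
    Summable (fun n : ℕ => (n : ℝ) * ((2 * n).choose n : ℝ) * y ^ n) := by
  simpa using cb_summable_aux hy 1

private lemma key_bound {r : ℝ} (hr0 : 0 < r) {z : ℝ} (hz : |z| ≤ r) (n : ℕ) :
    ‖((2 * n).choose n : ℝ) * ((n : ℝ) * z ^ (n - 1))‖
      ≤ (4 / r) * ((n : ℝ) * (4 * r) ^ n) := by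
  rcases n with _ | m
  · simp
  · have h1 : ‖((2 * (m+1)).choose (m+1) : ℝ) * (((m+1) : ℝ) * z ^ m)‖
        ≤ 4 ^ (m+1) * (((m:ℝ)+1) * r ^ m) := by
      rw [norm_mul, norm_mul, Real.norm_eq_abs, Real.norm_eq_abs, Real.norm_eq_abs,
        abs_pow]
      have hcb := cb_le_four_pow (m+1)
      have habs : |z| ^ m ≤ r ^ m := pow_le_pow_left₀ (abs_nonneg z) hz m
      rw [abs_of_nonneg (by positivity : (0:ℝ) ≤ ((2 * (m+1)).choose (m+1) : ℝ)),
        abs_of_nonneg (by positivity : (0:ℝ) ≤ ((m:ℝ)+1))]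
      gcongr
    have h2 : (4 / r) * ((((m+1):ℕ) : ℝ) * (4 * r) ^ (m+1))
        = 4 * (((m:ℝ)+1) * (4:ℝ)^(m+1) * r ^ m) := by
      rw [mul_pow]
      field_simp
      push_cast
      ring
    calc ‖((2 * (m+1)).choose (m+1) : ℝ) * ((((m+1):ℕ) : ℝ) * z ^ (m+1-1))‖
        = ‖((2 * (m+1)).choose (m+1) : ℝ) * (((m+1) : ℝ) * z ^ m)‖ := by push_cast; ring_nf
      _ ≤ 4 ^ (m+1) * (((m:ℝ)+1) * r ^ m) := h1
      _ ≤ (4 / r) * ((((m+1):ℕ) : ℝ) * (4 * r) ^ (m+1)) := by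
          rw [h2]
          have hA : (0:ℝ) ≤ ((m:ℝ)+1) * (4:ℝ)^(m+1) * r ^ m := by positivity
          nlinarith [hA]

private lemma summable_u {r : ℝ} (hr0 : 0 < r) (hr4 : r < 4⁻¹) :
    Summable (fun n : ℕ => (4 / r) * ((n : ℝ) * (4 * r) ^ n)) := by
  have h4r : ‖4 * r‖ < 1 := by
    rw [Real.norm_eq_abs, abs_of_nonneg (by positivity)]; linarith
  have := (summable_pow_mul_geometric_of_norm_lt_one 1 h4r).mul_left (4 / r)
  simpa using this

private lemma summable_cbD {y : ℝ} (hy : |y| < 4⁻¹) :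
    Summable (fun n : ℕ => ((2 * n).choose n : ℝ) * ((n : ℝ) * y ^ (n - 1))) := by
  set r : ℝ := (|y| + 4⁻¹) / 2 with hr
  have hr0 : 0 < r := by positivity
  have hyr : |y| ≤ r := by rw [hr]; linarith [abs_nonneg y]
  have hr4 : r < 4⁻¹ := by rw [hr]; linarith
  exact (summable_u hr0 hr4).of_norm_bounded (fun n => key_bound hr0 hyr n)

private lemma hasDerivAt_cbT {y : ℝ} (hy : |y| < 4⁻¹) :
    HasDerivAt cbT
      (∑' n : ℕ, ((2 * n).choose n : ℝ) * ((n : ℝ) * y ^ (n - 1))) y := by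
  set r : ℝ := (|y| + 4⁻¹) / 2 with hr
  have hr0 : 0 < r := by positivity
  have hyr : |y| < r := by rw [hr]; linarith
  have hr4 : r < 4⁻¹ := by rw [hr]; linarith
  have h0r : (0:ℝ) ∈ Metric.ball (0:ℝ) r := by simp [hr0]
  have hyb : y ∈ Metric.ball (0:ℝ) r := by
    simpa [Real.dist_eq] using hyr
  exact hasDerivAt_tsum_of_isPreconnected (summable_u hr0 hr4) Metric.isOpen_ball
    (convex_ball (0:ℝ) r).isPreconnected
    (fun n z _ => (hasDerivAt_pow n z).const_mul _)
    (fun n z hz => key_bound hr0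
      (by have := Metric.mem_ball.mp hz; rw [Real.dist_eq, sub_zero] at this; exact this.le) n)
    h0r (by simpa using summable_cb (show |(0:ℝ)| < 4⁻¹ by norm_num)) hyb

private lemma cbT_ode {y : ℝ} (hy : |y| < 4⁻¹) :
    (1 - 4 * y) * (∑' n : ℕ, ((2 * n).choose n : ℝ) * ((n : ℝ) * y ^ (n - 1)))
      = 2 * cbT y := by
  set D := ∑' n : ℕ, ((2 * n).choose n : ℝ) * ((n : ℝ) * y ^ (n - 1)) with hD
  have hsum := summable_cbD hy
  have hrec : ∀ n : ℕ, ((2 * (n+1)).choose (n+1) : ℝ) * ((n : ℝ) + 1)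
      = 2 * (2 * (n:ℝ) + 1) * ((2 * n).choose n : ℝ) := by
    intro n
    have h := Nat.succ_mul_centralBinom_succ n
    rw [Nat.centralBinom_eq_two_mul_choose, Nat.centralBinom_eq_two_mul_choose] at h
    have := congrArg (Nat.cast : ℕ → ℝ) h
    push_cast at this
    linarith
  have h1 : D = ∑' n : ℕ, ((2 * (n+1)).choose (n+1) : ℝ) * (((n:ℝ)+1) * y ^ n) := by
    rw [hD, Summable.tsum_eq_zero_add hsum]
    push_cast
    simp
  have h2 : ∀ n : ℕ, ((2 * (n+1)).choose (n+1) : ℝ) * (((n:ℝ)+1) * y ^ n)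
      = 4 * ((n : ℝ) * ((2 * n).choose n : ℝ) * y ^ n)
        + 2 * (((2 * n).choose n : ℝ) * y ^ n) := by
    intro n
    have h := hrec n
    linear_combination y ^ n * h
  have hs1 := (summable_cb1 hy).mul_left 4
  have hs0 := (summable_cb hy).mul_left 2
  have h3 : D = 4 * (∑' n : ℕ, (n : ℝ) * ((2 * n).choose n : ℝ) * y ^ n)
      + 2 * cbT y := by
    rw [h1]
    have := Summable.tsum_add hs1 hs0
    rw [cbT, ← tsum_mul_left, ← tsum_mul_left, ← this]
    exact tsum_congr h2
  have h4 : (∑' n : ℕ, (n : ℝ) * ((2 * n).choose n : ℝ) * y ^ n) = y * D := by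
    rw [hD, ← tsum_mul_left]
    refine tsum_congr fun n => ?_
    rcases n with _ | m
    · simp
    · have : y ^ (m + 1) = y * y ^ m := by ring
      push_cast
      rw [this]
      ring_nf
  rw [h4] at h3
  linarith

private lemma cbT_zero : cbT 0 = 1 := by
  rw [cbT, tsum_eq_single 0 (fun n hn => by simp [zero_pow hn])]
  simp

private lemma cbT_sq {y : ℝ} (hy : |y| < 4⁻¹) : (cbT y) ^ 2 * (1 - 4 * y) = 1 := by
  set h : ℝ → ℝ := fun z => (cbT z) ^ 2 * (1 - 4 * z) with hh
  have hderiv : ∀ z : ℝ, |z| < 4⁻¹ → HasDerivAt h 0 z := by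
    intro z hz
    have hT := hasDerivAt_cbT hz
    set D := ∑' n : ℕ, ((2 * n).choose n : ℝ) * ((n : ℝ) * z ^ (n - 1)) with hDdef
    have hlin : HasDerivAt (fun w : ℝ => 1 - 4 * w) (-4) z := by
      simpa using ((hasDerivAt_id z).const_mul (4:ℝ)).const_sub 1
    have hmain : HasDerivAt h (2 * cbT z ^ 1 * D * (1 - 4 * z) + cbT z ^ 2 * (-4)) z :=
      (hT.pow 2).mul hlin
    have hode := cbT_ode hz
    rw [← hDdef] at hode
    have : 2 * cbT z ^ 1 * D * (1 - 4 * z) + cbT z ^ 2 * (-4) = 0 := by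
      linear_combination 2 * cbT z * hode
    rwa [this] at hmain
  have hzmem : ∀ {a b z : ℝ}, |a| < 4⁻¹ → |b| < 4⁻¹ → z ∈ Icc a b → |z| < 4⁻¹ := by
    intro a b z ha hb hz
    rw [abs_lt] at *
    exact ⟨by linarith [hz.1, ha.1], by linarith [hz.2, hb.2]⟩
  have h0 : |(0:ℝ)| < 4⁻¹ := by norm_num
  rcases le_or_gt 0 y with hy0 | hy0
  · have := constant_of_has_deriv_right_zero (f := h) (a := 0) (b := y)
      (fun z hz => (hderiv z (hzmem h0 hy hz)).continuousAt.continuousWithinAt)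
      (fun z hz => ((hderiv z (hzmem h0 hy (Ico_subset_Icc_self hz))).hasDerivWithinAt))
      y (right_mem_Icc.2 hy0)
    simp only [hh, cbT_zero] at this
    norm_num at this
    exact this
  · have := constant_of_has_deriv_right_zero (f := h) (a := y) (b := 0)
      (fun z hz => (hderiv z (hzmem hy h0 hz)).continuousAt.continuousWithinAt)
      (fun z hz => ((hderiv z (hzmem hy h0 (Ico_subset_Icc_self hz))).hasDerivWithinAt))
      0 (right_mem_Icc.2 hy0.le)
    simp only [hh, cbT_zero] at this
    norm_num at this
    exact this.symm

private lemma cbT_pos {y : ℝ} (hy : |y| < 4⁻¹) : 0 < cbT y := by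
  rcases le_or_gt 0 y with hy0 | hy0
  · have h1 : ((2 * 0).choose 0 : ℝ) * y ^ 0 ≤ cbT y :=
      Summable.le_tsum (summable_cb hy) 0 (fun n _ => by positivity)
    simp at h1
    linarith
  · by_contra hneg
    push_neg at hneg
    have hcont : ContinuousOn cbT (Icc y 0) := by
      intro z hz
      have hzlt : |z| < 4⁻¹ := by
        have : |z| ≤ |y| := by
          rw [abs_of_nonpos hz.2, abs_of_neg hy0]
          linarith [hz.1]
        linarith
      exact (hasDerivAt_cbT hzlt).continuousAt.continuousWithinAt
    have hsub := intermediate_value_Icc hy0.le hcont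
    have h0mem : (0:ℝ) ∈ Icc (cbT y) (cbT 0) := ⟨hneg, by rw [cbT_zero]; norm_num⟩
    obtain ⟨z, hz, hz0⟩ := hsub h0mem
    have hzlt : |z| < 4⁻¹ := by
      have : |z| ≤ |y| := by
        rw [abs_of_nonpos hz.2, abs_of_neg hy0]
        linarith [hz.1]
      linarith
    have := cbT_sq hzlt
    rw [hz0] at this
    norm_num at this

/-- For `|x| < 1`, `∑_{k≥1} k·C(2k,k)·(x/4)^k = x / (2(1−x)^{3/2})`. -/
theorem central_binom_series_deriv (x : ℝ) (hx : |x| < 1) :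
    ∑' k : ℕ, (k : ℝ) * ((2 * k).choose k : ℝ) * (x / 4) ^ k
      = x / (2 * (1 - x) ^ ((3 : ℝ) / 2)) := by
  have hx4 : |x / 4| < 4⁻¹ := by
    rw [abs_div]
    norm_num
    linarith [hx]
  set t : ℝ := x / 4 with ht
  set D := ∑' n : ℕ, ((2 * n).choose n : ℝ) * ((n : ℝ) * t ^ (n - 1)) with hDdef
  have hode := cbT_ode hx4
  rw [← hDdef] at hode
  have h14 : 1 - 4 * t = 1 - x := by rw [ht]; ring
  rw [h14] at hode
  have hS : (∑' k : ℕ, (k : ℝ) * ((2 * k).choose k : ℝ) * t ^ k) = t * D := by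
    rw [hDdef, ← tsum_mul_left]
    refine tsum_congr fun n => ?_
    rcases n with _ | m
    · simp
    · have : t ^ (m + 1) = t * t ^ m := by ring
      push_cast
      rw [this]
      ring_nf
  have hsq := cbT_sq hx4
  rw [h14] at hsq
  have hpos := cbT_pos hx4
  set T := cbT t with hT
  have h1x : (0:ℝ) < 1 - x := by rw [abs_lt] at hx; linarith [hx.2]
  set s : ℝ := Real.sqrt (1 - x) with hs
  have hs0 : 0 < s := Real.sqrt_pos.2 h1x
  have hs2 : s ^ 2 = 1 - x := Real.sq_sqrt h1x.le
  have hTs : T * s = 1 := by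
    have h1 : (T * s) ^ 2 = 1 := by
      rw [mul_pow, hs2]; exact hsq
    have h2 : 0 < T * s := mul_pos hpos hs0
    nlinarith
  have hD3 : s ^ 3 * D = 2 := by
    have h1 : (1 - x) * D = 2 * T := hode
    linear_combination s * h1 + 2 * hTs + s * D * hs2
  have hrpow : (1 - x) ^ ((3:ℝ)/2) = s ^ 3 := by
    rw [show (3:ℝ)/2 = (1/2 : ℝ) * (3:ℕ) by push_cast; ring,
      Real.rpow_mul h1x.le, Real.rpow_natCast, ← Real.sqrt_eq_rpow, ← hs]
  rw [hS, hrpow]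
  have hs3 : s ^ 3 ≠ 0 := by positivity
  rw [eq_div_iff (by positivity)]
  rw [ht]
  linear_combination (x / 2) * hD3
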